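/- arXiv:2402.00178 — 2 statements merged into one kernel-verified Lean document; each statement's English description precedes it below -/
import Mathlib

section
/- (Lemma 1(iii), Fourier form.) Let d ≥ 1, τ > 0, γ > 0, 0 < δ < ξ ≤ 1, and let Ω ⊆ {ω ∈ ℝ^d : |⟨ω, n⟩| ≥ γ/|n|₁^τ for all nonzero n ∈ ℤ^d}. Let m, λ ≥ 0 and suppose f_n : Ω → ℂ, for n ∈ ℤ^d \ {0}, satisfy |f_n(ω)| ≤ m e^{−|n|₁ ξ} and |f_n(ω) − f_n(ω')| ≤ λ e^{−|n|₁ ξ} ‖ω − ω'‖ for all ω, ω' ∈ Ω. Then the series F(x, ω) = Σ_{n ≠ 0} (f_n(ω)/(i⟨ω, n⟩)) e^{i⟨n, x⟩} converges absolutely for every x ∈ ℂ^d with |Im x_j| ≤ ξ − δ, and there exist constants c, k > 0 depending only on d and τ such that for all such x and all ω, ω' ∈ Ω: |F(x, ω) − F(x, ω')| ≤ c δ^{−k} γ^{−2} (m + λγ) ‖ω − ω'‖. -/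
/-- Euclidean norm on `Fin d → ℝ`. -/
noncomputable def eNorm {d : ℕ} (v : Fin d → ℝ) : ℝ := Real.sqrt (∑ i, v i ^ 2)

/-- Standard inner product on `Fin d → ℝ`. -/
def dotR {d : ℕ} (v w : Fin d → ℝ) : ℝ := ∑ i, v i * w i

/-- 1-norm of an integer vector, as a real number. -/
def oneNorm {d : ℕ} (n : Fin d → ℤ) : ℝ := ∑ i, |(n i : ℝ)|

lemma oneNorm_nonneg {d : ℕ} (n : Fin d → ℤ) : 0 ≤ oneNorm n :=
  Finset.sum_nonneg fun _ _ => abs_nonneg _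

lemma one_le_oneNorm {d : ℕ} {n : Fin d → ℤ} (hn : n ≠ 0) : 1 ≤ oneNorm n := by
  obtain ⟨i, hi⟩ : ∃ i, n i ≠ 0 := by
    by_contra h; push_neg at h; exact hn (funext h)
  have h1 : (1 : ℝ) ≤ |(n i : ℝ)| := by
    rw [← Int.cast_abs]
    exact_mod_cast Int.one_le_abs hi
  calc (1:ℝ) ≤ |(n i : ℝ)| := h1
    _ ≤ oneNorm n := Finset.single_le_sum (f := fun j => |(n j : ℝ)|)
        (fun j _ => abs_nonneg _) (Finset.mem_univ i)

lemma eNorm_nonneg {d : ℕ} (v : Fin d → ℝ) : 0 ≤ eNorm v := Real.sqrt_nonneg _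

lemma abs_coord_le_eNorm {d : ℕ} (v : Fin d → ℝ) (i : Fin d) : |v i| ≤ eNorm v := by
  rw [eNorm, ← Real.sqrt_sq_eq_abs]
  exact Real.sqrt_le_sqrt (Finset.single_le_sum (f := fun j => v j ^ 2)
    (fun j _ => sq_nonneg _) (Finset.mem_univ i))

lemma abs_dotR_le {d : ℕ} (v : Fin d → ℝ) (n : Fin d → ℤ) :
    |dotR v (fun i => (n i : ℝ))| ≤ eNorm v * oneNorm n := by
  rw [dotR, oneNorm, Finset.mul_sum]
  calc |∑ i, v i * (n i : ℝ)| ≤ ∑ i, |v i * (n i : ℝ)| := Finset.abs_sum_le_sum_abs _ _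
    _ ≤ ∑ i, eNorm v * |(n i : ℝ)| := by
        refine Finset.sum_le_sum fun i _ => ?_
        rw [abs_mul]
        exact mul_le_mul_of_nonneg_right (abs_coord_le_eNorm v i) (abs_nonneg _)

lemma int_exp_hasSum {ε : ℝ} (hε : 0 < ε) :
    ∃ S : ℝ, HasSum (fun k : ℤ => Real.exp (-(ε * |(k : ℝ)|))) S ∧
      0 ≤ S ∧ S ≤ 2 / (1 - Real.exp (-ε)) := by
  set r := Real.exp (-ε) with hr
  have hr0 : 0 < r := Real.exp_pos _
  have hr1 : r < 1 := Real.exp_lt_one_iff.mpr (by linarith)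
  have hfun : ∀ k : ℤ, Real.exp (-(ε * |(k : ℝ)|)) = r ^ k.natAbs := by
    intro k
    rw [hr, ← Real.exp_nat_mul]
    congr 1
    have habs : |(k : ℝ)| = (k.natAbs : ℝ) := by
      rw [Nat.cast_natAbs, Int.cast_abs]
    rw [habs]; ring
  have h1 : HasSum (fun n : ℕ => r ^ n) (1 - r)⁻¹ := hasSum_geometric_of_lt_one hr0.le hr1
  have h2 : HasSum (fun n : ℕ => r * r ^ n) (r * (1 - r)⁻¹) := h1.mul_left r
  have hS : HasSum (fun k : ℤ => Real.exp (-(ε * |(k : ℝ)|)))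
      ((1 - r)⁻¹ + r * (1 - r)⁻¹) := by
    refine HasSum.of_nat_of_neg_add_one ?_ ?_
    · convert h1 using 2 with n
      rw [hfun]; norm_num
    · convert h2 using 2 with n
      rw [hfun]
      have hna : (-((n:ℤ) + 1)).natAbs = n + 1 := by omega
      rw [hna, pow_succ]; ring
  have h3 : 0 < 1 - r := by linarith
  refine ⟨_, hS, ?_, ?_⟩
  · positivity
  · rw [div_eq_mul_inv]
    nlinarith [inv_pos.mpr h3]

lemma one_sub_exp_neg_ge {ε : ℝ} (hε : 0 < ε) (hε1 : ε ≤ 1) :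
    ε / 3 ≤ 1 - Real.exp (-ε) := by
  have h1 : 1 - Real.exp (-ε) = Real.exp (-ε) * (Real.exp ε - 1) := by
    rw [mul_sub, ← Real.exp_add]
    simp
  have h2 : ε ≤ Real.exp ε - 1 := by linarith [Real.add_one_le_exp ε]
  have h3 : (1:ℝ)/3 ≤ Real.exp (-ε) := by
    have hmono : Real.exp (-1) ≤ Real.exp (-ε) := Real.exp_le_exp.mpr (by linarith)
    have he : Real.exp 1 < 3 := by
      have := Real.exp_one_lt_d9
      linarith
    have hprod : Real.exp (-1) * Real.exp 1 = 1 := by rw [← Real.exp_add]; norm_num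
    nlinarith [Real.exp_pos (1:ℝ)]
  nlinarith [Real.exp_pos (-ε)]

set_option maxHeartbeats 1000000 in
lemma pi_exp_sum (d : ℕ) {ε : ℝ} (hε : 0 < ε) (hε1 : ε ≤ 1) :
    Summable (fun n : Fin d → ℤ => Real.exp (-(ε * oneNorm n))) ∧
    ∑' n : Fin d → ℤ, Real.exp (-(ε * oneNorm n)) ≤ (6 / ε) ^ d := by
  induction d with
  | zero =>
    constructor
    · exact Summable.of_finite
    · simp [oneNorm, tsum_fintype]
  | succ d ih =>
    obtain ⟨S, hS, hS0, hSle⟩ := int_exp_hasSum hε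
    have hS6 : S ≤ 6 / ε := by
      have h3 := one_sub_exp_neg_ge hε hε1
      have h4 : 0 < 1 - Real.exp (-ε) := lt_of_lt_of_le (by positivity) h3
      calc S ≤ 2 / (1 - Real.exp (-ε)) := hSle
        _ ≤ 2 / (ε / 3) := by
            apply div_le_div_of_nonneg_left (by norm_num) (by positivity) h3
        _ = 6 / ε := by field_simp; ring
    set e := Fin.consEquiv (fun _ : Fin (d+1) => ℤ)
    have key : ∀ n : Fin (d+1) → ℤ,
        Real.exp (-(ε * oneNorm n)) =
        Real.exp (-(ε * |(n 0 : ℝ)|)) * Real.exp (-(ε * oneNorm (fun i : Fin d => n i.succ))) := by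
      intro n
      rw [← Real.exp_add, oneNorm, Fin.sum_univ_succ, oneNorm]
      ring_nf
    have hsum2 : Summable (fun p : ℤ × (Fin d → ℤ) =>
        Real.exp (-(ε * |(p.1 : ℝ)|)) * Real.exp (-(ε * oneNorm p.2))) :=
      Summable.mul_of_nonneg hS.summable ih.1 (fun k => (Real.exp_pos _).le)
        (fun b => (Real.exp_pos _).le)
    have hcomp : ∀ p : ℤ × (Fin d → ℤ),
        Real.exp (-(ε * oneNorm (e p))) =
        Real.exp (-(ε * |(p.1 : ℝ)|)) * Real.exp (-(ε * oneNorm p.2)) := by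
      intro p
      rw [key]
      simp [e, Fin.consEquiv]
    have hsum : Summable (fun n : Fin (d+1) → ℤ => Real.exp (-(ε * oneNorm n))) := by
      rw [← e.summable_iff]
      convert hsum2 using 1
      funext p
      exact hcomp p
    refine ⟨hsum, ?_⟩
    have ht : ∑' n : Fin (d+1) → ℤ, Real.exp (-(ε * oneNorm n)) =
        (∑' k : ℤ, Real.exp (-(ε * |(k : ℝ)|))) *
        (∑' b : Fin d → ℤ, Real.exp (-(ε * oneNorm b))) := by
      rw [← e.tsum_eq]
      rw [tsum_mul_tsum_of_summable_norm (by simpa [Real.norm_eq_abs, abs_of_nonneg (Real.exp_pos _).le] using hS.summable)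
        (by simpa [Real.norm_eq_abs, abs_of_nonneg (Real.exp_pos _).le] using ih.1)]
      congr 1
      funext p
      exact hcomp p
    rw [ht, hS.tsum_eq, pow_succ]
    have htn : 0 ≤ ∑' b : Fin d → ℤ, Real.exp (-(ε * oneNorm b)) :=
      tsum_nonneg fun b => (Real.exp_pos _).le
    calc S * (∑' b : Fin d → ℤ, Real.exp (-(ε * oneNorm b)))
        ≤ (6/ε) * (6/ε)^d := by
          apply mul_le_mul hS6 ih.2 htn (by positivity)
      _ = (6/ε)^d * (6/ε) := by ring

lemma rpow_exp_le {q p δ N : ℝ} (hq : 0 ≤ q) (hqp : q ≤ p) (hδ : 0 < δ) (hN : 1 ≤ N) :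
    N ^ q * Real.exp (-(δ * N)) ≤
      (Nat.ceil p).factorial * (2 / δ) ^ (Nat.ceil p) * Real.exp (-(δ / 2 * N)) := by
  set P := Nat.ceil p with hP
  have hN0 : (0:ℝ) < N := lt_of_lt_of_le one_pos hN
  have h1 : N ^ q ≤ N ^ (P : ℝ) :=
    Real.rpow_le_rpow_of_exponent_le hN (hqp.trans (Nat.le_ceil p))
  rw [Real.rpow_natCast] at h1
  have h2 : (δ / 2 * N) ^ P / P.factorial ≤ Real.exp (δ / 2 * N) :=
    Real.pow_div_factorial_le_exp (x := δ / 2 * N) (by positivity) P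
  have hfac : (0:ℝ) < P.factorial := by positivity
  have h3 : (δ / 2) ^ P * N ^ P ≤ P.factorial * Real.exp (δ / 2 * N) := by
    rw [div_le_iff₀ hfac] at h2
    calc (δ / 2) ^ P * N ^ P = (δ / 2 * N) ^ P := (mul_pow _ _ _).symm
      _ ≤ Real.exp (δ / 2 * N) * P.factorial := h2
      _ = P.factorial * Real.exp (δ / 2 * N) := by ring
  have h4 : N ^ P ≤ P.factorial * (2 / δ) ^ P * Real.exp (δ / 2 * N) := by
    have hpos : (0:ℝ) < (δ / 2) ^ P := by positivity
    rw [← mul_le_mul_iff_right₀ hpos]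
    calc (δ / 2) ^ P * N ^ P ≤ P.factorial * Real.exp (δ / 2 * N) := h3
      _ = (δ / 2) ^ P * (P.factorial * (2 / δ) ^ P * Real.exp (δ / 2 * N)) := by
          have : (δ / 2) ^ P * (2 / δ) ^ P = 1 := by
            rw [← mul_pow]
            field_simp
            exact one_pow _
          calc P.factorial * Real.exp (δ / 2 * N)
              = ((δ / 2) ^ P * (2 / δ) ^ P) * (P.factorial * Real.exp (δ / 2 * N)) := by
                rw [this]; ring
            _ = (δ / 2) ^ P * (P.factorial * (2 / δ) ^ P * Real.exp (δ / 2 * N)) := by ring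
  calc N ^ q * Real.exp (-(δ * N)) ≤ N ^ P * Real.exp (-(δ * N)) := by
        apply mul_le_mul_of_nonneg_right h1 (Real.exp_pos _).le
    _ ≤ (P.factorial * (2 / δ) ^ P * Real.exp (δ / 2 * N)) * Real.exp (-(δ * N)) := by
        apply mul_le_mul_of_nonneg_right h4 (Real.exp_pos _).le
    _ = P.factorial * (2 / δ) ^ P * Real.exp (-(δ / 2 * N)) := by
        rw [mul_assoc, ← Real.exp_add]
        congr 2
        ring

lemma abs_exp_I_sum_le {d : ℕ} (n : Fin d → ℤ) (x : Fin d → ℂ) {b : ℝ}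
    (hb : 0 ≤ b) (hx : ∀ j, |(x j).im| ≤ b) :
    ‖Complex.exp (Complex.I * ∑ i, (n i : ℂ) * x i)‖ ≤
      Real.exp (b * oneNorm n) := by
  rw [Complex.norm_exp]
  apply Real.exp_le_exp.mpr
  have him : (Complex.I * ∑ i, (n i : ℂ) * x i).re = -(∑ i, (n i : ℝ) * (x i).im) := by
    simp [Complex.mul_re, Complex.im_sum]
  rw [him, oneNorm, Finset.mul_sum, ← Finset.sum_neg_distrib]
  apply Finset.sum_le_sum
  intro i _
  calc -((n i : ℝ) * (x i).im) ≤ |(n i : ℝ) * (x i).im| := neg_le_abs _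
    _ = |(n i : ℝ)| * |(x i).im| := abs_mul _ _
    _ ≤ |(n i : ℝ)| * b := mul_le_mul_of_nonneg_left (hx i) (abs_nonneg _)
    _ = b * |(n i : ℝ)| := mul_comm _ _

set_option maxHeartbeats 2000000 in
/-- Lemma 1(iii): Lipschitz dependence on the Diophantine frequency `ω` of the solution
`F = D_ω⁻¹ f` of the small-divisor equation: if `|f_n(ω)| ≤ m e^(−|n|₁ξ)` and
`|f_n(ω) − f_n(ω')| ≤ λ e^(−|n|₁ξ)‖ω − ω'‖` on a set `Ω` of `(γ,τ)`-Diophantine vectors,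
then `F(x,ω) = Σ_{n≠0} f_n(ω)/(i⟨ω,n⟩) e^(i⟨n,x⟩)` converges absolutely for
`|Im x_j| ≤ ξ − δ` and `|F(x,ω) − F(x,ω')| ≤ c δ^(−k) γ^(−2) (m + λγ) ‖ω − ω'‖` with
`c, k > 0` depending only on `d` and `τ`. -/
theorem small_divisor_series_lipschitz (d : ℕ) (hd : 1 ≤ d) (τ : ℝ) (hτ : 0 < τ) :
    ∃ c k : ℝ, 0 < c ∧ 0 < k ∧
      ∀ (γ ξ δ : ℝ), 0 < γ → 0 < δ → δ < ξ → ξ ≤ 1 →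
      ∀ Ω : Set (Fin d → ℝ),
        (Ω ⊆ {ω | ∀ n : Fin d → ℤ, n ≠ 0 →
          γ / oneNorm n ^ τ ≤ |dotR ω (fun i => (n i : ℝ))|}) →
      ∀ (m lam : ℝ), 0 ≤ m → 0 ≤ lam →
      ∀ f : (Fin d → ℤ) → (Fin d → ℝ) → ℂ,
        (∀ n : Fin d → ℤ, n ≠ 0 → ∀ ω ∈ Ω,
          ‖f n ω‖ ≤ m * Real.exp (-(oneNorm n * ξ))) →
        (∀ n : Fin d → ℤ, n ≠ 0 → ∀ ω ∈ Ω, ∀ ω' ∈ Ω,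
          ‖f n ω - f n ω'‖ ≤
            lam * Real.exp (-(oneNorm n * ξ)) * eNorm (ω - ω')) →
      ∀ x : Fin d → ℂ, (∀ j, |(x j).im| ≤ ξ - δ) →
        (∀ ω ∈ Ω, Summable (fun n : {n : Fin d → ℤ // n ≠ 0} =>
          ‖(f n.1 ω / (Complex.I * (dotR ω fun i => (n.1 i : ℝ))) *
            Complex.exp (Complex.I * ∑ i, (n.1 i : ℂ) * x i))‖)) ∧
        (∀ ω ∈ Ω, ∀ ω' ∈ Ω,
          ‖((∑' n : {n : Fin d → ℤ // n ≠ 0},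
              f n.1 ω / (Complex.I * (dotR ω fun i => (n.1 i : ℝ))) *
                Complex.exp (Complex.I * ∑ i, (n.1 i : ℂ) * x i)) -
             (∑' n : {n : Fin d → ℤ // n ≠ 0},
              f n.1 ω' / (Complex.I * (dotR ω' fun i => (n.1 i : ℝ))) *
                Complex.exp (Complex.I * ∑ i, (n.1 i : ℂ) * x i)))‖ ≤
            c * δ ^ (-k) * γ⁻¹ ^ 2 * (m + lam * γ) * eNorm (ω - ω')) := by
  classical
  set p : ℝ := 2 * τ + 1 with hp
  set P : ℕ := Nat.ceil p with hPdef
  refine ⟨P.factorial * 2 ^ P * 12 ^ d, ((P + d : ℕ) : ℝ), by positivity, ?_, ?_⟩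
  · have h0 : 0 < P + d := by omega
    exact_mod_cast h0
  intro γ ξ δ hγ hδ hδξ hξ1 Ω hΩ m lam hm hlam f hf hfl x hx
  have hδ1 : δ ≤ 1 := hδξ.le.trans hξ1
  have hξδ : 0 ≤ ξ - δ := by linarith
  have hε0 : 0 < δ / 2 := by linarith
  have hε1 : δ / 2 ≤ 1 := by linarith
  obtain ⟨hG, hGle⟩ := pi_exp_sum d hε0 hε1
  set C : ℝ := P.factorial * (2 / δ) ^ P with hC
  have hC0 : 0 < C := by positivity
  set g : {n : Fin d → ℤ // n ≠ 0} → ℝ := fun n => Real.exp (-(δ / 2 * oneNorm n.1)) with hg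
  have hgsum : Summable g :=
    hG.comp_injective (Subtype.val_injective (p := fun n : Fin d → ℤ => n ≠ 0))
  have hgle : ∑' n, g n ≤ (12 / δ) ^ d := by
    have h1 : ∑' n, g n ≤ ∑' n : Fin d → ℤ, Real.exp (-(δ / 2 * oneNorm n)) :=
      Summable.tsum_le_tsum_of_inj (Subtype.val) Subtype.val_injective
        (fun c _ => (Real.exp_pos _).le) (fun i => le_rfl) hgsum hG
    have h2 : (6 / (δ / 2) : ℝ) ^ d = (12 / δ) ^ d := by
      congr 1
      rw [div_div_eq_mul_div]
      norm_num
    calc ∑' n, g n ≤ _ := h1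
      _ ≤ (6 / (δ / 2)) ^ d := hGle
      _ = (12 / δ) ^ d := h2
  -- divisor bounds
  have hdiv : ∀ ω ∈ Ω, ∀ n : {n : Fin d → ℤ // n ≠ 0},
      |dotR ω (fun i => (n.1 i : ℝ))|⁻¹ ≤ oneNorm n.1 ^ τ / γ ∧
      dotR ω (fun i => (n.1 i : ℝ)) ≠ 0 := by
    intro ω hω n
    have hN1 : 1 ≤ oneNorm n.1 := one_le_oneNorm n.2
    have hN0 : 0 < oneNorm n.1 := lt_of_lt_of_le one_pos hN1
    have hM0 : 0 < oneNorm n.1 ^ τ := Real.rpow_pos_of_pos hN0 τ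
    have hdio := hΩ hω n.1 n.2
    have hapos : 0 < |dotR ω fun i => (n.1 i : ℝ)| :=
      lt_of_lt_of_le (by positivity) hdio
    constructor
    · have h := one_div_le_one_div_of_le (by positivity) hdio
      rw [one_div_div] at h
      rw [← one_div]
      exact h
    · exact abs_pos.mp hapos
  have hE : ∀ n : {n : Fin d → ℤ // n ≠ 0},
      ‖Complex.exp (Complex.I * ∑ i, (n.1 i : ℂ) * x i)‖ ≤
        Real.exp ((ξ - δ) * oneNorm n.1) :=
    fun n => abs_exp_I_sum_le n.1 x hξδ hx
  -- pointwise bound on terms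
  have habs : ∀ ω ∈ Ω, ∀ n : {n : Fin d → ℤ // n ≠ 0},
      ‖f n.1 ω / (Complex.I * (dotR ω fun i => (n.1 i : ℝ))) *
        Complex.exp (Complex.I * ∑ i, (n.1 i : ℂ) * x i)‖ ≤ m / γ * C * g n := by
    intro ω hω n
    obtain ⟨hainv, hane⟩ := hdiv ω hω n
    have hN1 : 1 ≤ oneNorm n.1 := one_le_oneNorm n.2
    have hN0 : 0 < oneNorm n.1 := lt_of_lt_of_le one_pos hN1
    have heq : ‖f n.1 ω / (Complex.I * (dotR ω fun i => (n.1 i : ℝ))) *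
        Complex.exp (Complex.I * ∑ i, (n.1 i : ℂ) * x i)‖
        = ‖f n.1 ω‖ * |dotR ω fun i => (n.1 i : ℝ)|⁻¹ *
          ‖Complex.exp (Complex.I * ∑ i, (n.1 i : ℂ) * x i)‖ := by
      rw [norm_mul, norm_div, norm_mul, Complex.norm_I, Complex.norm_real, Real.norm_eq_abs, one_mul,
        div_eq_mul_inv]
    rw [heq]
    have hexp1 : Real.exp (-(oneNorm n.1 * ξ)) * Real.exp ((ξ - δ) * oneNorm n.1)
        = Real.exp (-(δ * oneNorm n.1)) := by
      rw [← Real.exp_add]; congr 1; ring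
    calc ‖f n.1 ω‖ * |dotR ω fun i => (n.1 i : ℝ)|⁻¹ *
          ‖Complex.exp (Complex.I * ∑ i, (n.1 i : ℂ) * x i)‖
        ≤ (m * Real.exp (-(oneNorm n.1 * ξ))) * (oneNorm n.1 ^ τ / γ) *
            Real.exp ((ξ - δ) * oneNorm n.1) := by
          gcongr <;> first
            | exact hf n.1 n.2 ω hω
            | exact hainv
            | exact hE n
            | positivity
      _ = m / γ * (oneNorm n.1 ^ τ * Real.exp (-(δ * oneNorm n.1))) := by
          rw [← hexp1]; ring
      _ ≤ m / γ * (C * Real.exp (-(δ / 2 * oneNorm n.1))) := by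
          have hkey : oneNorm n.1 ^ τ * Real.exp (-(δ * oneNorm n.1)) ≤
              C * Real.exp (-(δ / 2 * oneNorm n.1)) := by
            rw [hC]
            exact rpow_exp_le hτ.le (by rw [hp]; linarith) hδ hN1
          exact mul_le_mul_of_nonneg_left hkey (by positivity)
      _ = m / γ * C * g n := by rw [hg]; ring
  have hsummAbs : ∀ ω ∈ Ω, Summable (fun n : {n : Fin d → ℤ // n ≠ 0} =>
      ‖f n.1 ω / (Complex.I * (dotR ω fun i => (n.1 i : ℝ))) *
        Complex.exp (Complex.I * ∑ i, (n.1 i : ℂ) * x i)‖) := by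
    intro ω hω
    exact Summable.of_nonneg_of_le (fun n => norm_nonneg _) (habs ω hω)
      (hgsum.mul_left (m / γ * C))
  refine ⟨hsummAbs, ?_⟩
  -- Lipschitz per-term bound
  have hdiff : ∀ ω ∈ Ω, ∀ ω' ∈ Ω, ∀ n : {n : Fin d → ℤ // n ≠ 0},
      ‖f n.1 ω / (Complex.I * (dotR ω fun i => (n.1 i : ℝ))) *
          Complex.exp (Complex.I * ∑ i, (n.1 i : ℂ) * x i) -
        f n.1 ω' / (Complex.I * (dotR ω' fun i => (n.1 i : ℝ))) *
          Complex.exp (Complex.I * ∑ i, (n.1 i : ℂ) * x i)‖ ≤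
      (m + lam * γ) * γ⁻¹ ^ 2 * eNorm (ω - ω') * C * g n := by
    intro ω hω ω' hω' n
    obtain ⟨hainv, hane⟩ := hdiv ω hω n
    obtain ⟨hainv', hane'⟩ := hdiv ω' hω' n
    have hN1 : 1 ≤ oneNorm n.1 := one_le_oneNorm n.2
    have hN0 : 0 < oneNorm n.1 := lt_of_lt_of_le one_pos hN1
    set N := oneNorm n.1 with hN
    set a := dotR ω (fun i => (n.1 i : ℝ)) with ha
    set a' := dotR ω' (fun i => (n.1 i : ℝ)) with ha'
    set E := Complex.exp (Complex.I * ∑ i, (n.1 i : ℂ) * x i) with hEdef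
    have haC : (a : ℂ) ≠ 0 := Complex.ofReal_ne_zero.mpr hane
    have haC' : (a' : ℂ) ≠ 0 := Complex.ofReal_ne_zero.mpr hane'
    have hapos : 0 < |a| := abs_pos.mpr hane
    have hapos' : 0 < |a'| := abs_pos.mpr hane'
    have hid : f n.1 ω / (Complex.I * (a : ℂ)) * E - f n.1 ω' / (Complex.I * (a' : ℂ)) * E
        = ((f n.1 ω - f n.1 ω') / (Complex.I * (a : ℂ))) * E
          + (f n.1 ω' * ((Complex.I * (a' : ℂ) - Complex.I * (a : ℂ)) /
              ((Complex.I * (a : ℂ)) * (Complex.I * (a' : ℂ))))) * E := by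
      have hI := Complex.I_ne_zero
      field_simp
      ring
    rw [hid]
    have e1 : ‖Complex.I * (a' : ℂ) - Complex.I * (a : ℂ)‖ = |a' - a| := by
      rw [show Complex.I * (a' : ℂ) - Complex.I * (a : ℂ)
          = Complex.I * (((a' - a : ℝ) : ℂ)) by push_cast; ring]
      rw [norm_mul, Complex.norm_I, one_mul, Complex.norm_real, Real.norm_eq_abs]
    have e2 : ‖(Complex.I * (a : ℂ)) * (Complex.I * (a' : ℂ))‖ = |a| * |a'| := by
      rw [norm_mul, norm_mul, norm_mul, Complex.norm_I, Complex.norm_real, Real.norm_eq_abs,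
        Complex.norm_real, Real.norm_eq_abs, one_mul, one_mul]
    have habs1 : ‖((f n.1 ω - f n.1 ω') / (Complex.I * (a : ℂ))) * E‖
        = ‖f n.1 ω - f n.1 ω'‖ * |a|⁻¹ * ‖E‖ := by
      rw [norm_mul, norm_div, norm_mul, Complex.norm_I, Complex.norm_real, Real.norm_eq_abs, one_mul,
        div_eq_mul_inv]
    have habs2 : ‖(f n.1 ω' * ((Complex.I * (a' : ℂ) - Complex.I * (a : ℂ)) /
          ((Complex.I * (a : ℂ)) * (Complex.I * (a' : ℂ))))) * E‖
        = ‖f n.1 ω'‖ * (|a' - a| * (|a|⁻¹ * |a'|⁻¹)) * ‖E‖ := by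
      rw [norm_mul, norm_mul, norm_div, e1, e2]
      rw [div_eq_mul_inv, mul_inv]
    -- the dot product difference
    have hsub : |a' - a| ≤ eNorm (ω - ω') * N := by
      have heq : a' - a = dotR (ω' - ω) (fun i => (n.1 i : ℝ)) := by
        rw [ha, ha', dotR, dotR, dotR, ← Finset.sum_sub_distrib]
        apply Finset.sum_congr rfl
        intro i _
        rw [Pi.sub_apply]
        ring
      have hEnorm : eNorm (ω' - ω) = eNorm (ω - ω') := by
        rw [eNorm, eNorm]
        congr 1
        apply Finset.sum_congr rfl
        intro i _
        rw [Pi.sub_apply, Pi.sub_apply, ← neg_sub (ω i) (ω' i), neg_pow]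
        ring
      rw [heq, ← hEnorm]
      exact abs_dotR_le _ _
    have hEb : ‖E‖ ≤ Real.exp ((ξ - δ) * N) := hE n
    have hexp1 : Real.exp (-(N * ξ)) * Real.exp ((ξ - δ) * N) = Real.exp (-(δ * N)) := by
      rw [← Real.exp_add]; congr 1; ring
    have hD0 : 0 ≤ eNorm (ω - ω') := eNorm_nonneg _
    have hMτ : (0:ℝ) < N ^ τ := Real.rpow_pos_of_pos hN0 τ
    calc ‖((f n.1 ω - f n.1 ω') / (Complex.I * (a : ℂ))) * E
          + (f n.1 ω' * ((Complex.I * (a' : ℂ) - Complex.I * (a : ℂ)) /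
              ((Complex.I * (a : ℂ)) * (Complex.I * (a' : ℂ))))) * E‖
        ≤ ‖((f n.1 ω - f n.1 ω') / (Complex.I * (a : ℂ))) * E‖
          + ‖(f n.1 ω' * ((Complex.I * (a' : ℂ) - Complex.I * (a : ℂ)) /
              ((Complex.I * (a : ℂ)) * (Complex.I * (a' : ℂ))))) * E‖ :=
          norm_add_le _ _
      _ = ‖f n.1 ω - f n.1 ω'‖ * |a|⁻¹ * ‖E‖
          + ‖f n.1 ω'‖ * (|a' - a| * (|a|⁻¹ * |a'|⁻¹)) * ‖E‖ := by
          rw [habs1, habs2]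
      _ ≤ (lam * Real.exp (-(N * ξ)) * eNorm (ω - ω')) * (N ^ τ / γ) *
            Real.exp ((ξ - δ) * N)
          + (m * Real.exp (-(N * ξ))) * ((eNorm (ω - ω') * N) * ((N ^ τ / γ) * (N ^ τ / γ))) *
            Real.exp ((ξ - δ) * N) := by
          gcongr <;> first
            | exact hfl n.1 n.2 ω hω ω' hω'
            | exact hf n.1 n.2 ω' hω'
            | exact hsub
            | exact hainv
            | exact hainv'
            | exact hEb
            | positivity
      _ = eNorm (ω - ω') * γ⁻¹ ^ 2 * Real.exp (-(δ * N)) *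
            (lam * γ * N ^ τ + m * (N * N ^ τ * N ^ τ)) := by
          rw [← hexp1]
          field_simp
      _ ≤ eNorm (ω - ω') * γ⁻¹ ^ 2 * Real.exp (-(δ * N)) * ((m + lam * γ) * N ^ p) := by
          have hNp2 : N * N ^ τ * N ^ τ = N ^ p := by
            rw [hp, show (2 * τ + 1 : ℝ) = τ + τ + 1 by ring, Real.rpow_add hN0,
              Real.rpow_add hN0, Real.rpow_one]
            ring
          have hNτp : N ^ τ ≤ N ^ p :=
            Real.rpow_le_rpow_of_exponent_le hN1 (by rw [hp]; linarith)
          have hinner : lam * γ * N ^ τ + m * (N * N ^ τ * N ^ τ) ≤ (m + lam * γ) * N ^ p := by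
            rw [hNp2]
            have h1 : lam * γ * N ^ τ ≤ lam * γ * N ^ p :=
              mul_le_mul_of_nonneg_left hNτp (by positivity)
            nlinarith [Real.rpow_pos_of_pos hN0 p]
          exact mul_le_mul_of_nonneg_left hinner (by positivity)
      _ ≤ eNorm (ω - ω') * γ⁻¹ ^ 2 * ((m + lam * γ) * (C * Real.exp (-(δ / 2 * N)))) := by
          have hkey : N ^ p * Real.exp (-(δ * N)) ≤ C * Real.exp (-(δ / 2 * N)) := by
            rw [hC]
            exact rpow_exp_le (by rw [hp]; linarith) le_rfl hδ hN1
          calc eNorm (ω - ω') * γ⁻¹ ^ 2 * Real.exp (-(δ * N)) * ((m + lam * γ) * N ^ p)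
              = eNorm (ω - ω') * γ⁻¹ ^ 2 * ((m + lam * γ) *
                  (N ^ p * Real.exp (-(δ * N)))) := by ring
            _ ≤ eNorm (ω - ω') * γ⁻¹ ^ 2 * ((m + lam * γ) * (C * Real.exp (-(δ / 2 * N)))) := by
                apply mul_le_mul_of_nonneg_left _ (by positivity)
                exact mul_le_mul_of_nonneg_left hkey (by positivity)
      _ = (m + lam * γ) * γ⁻¹ ^ 2 * eNorm (ω - ω') * C * g n := by
          rw [hg]; ring
  -- assemble
  intro ω hω ω' hω'
  set K : ℝ := (m + lam * γ) * γ⁻¹ ^ 2 * eNorm (ω - ω') * C with hK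
  have hK0 : 0 ≤ K := by
    have := eNorm_nonneg (ω - ω')
    positivity
  have h1 := hsummAbs ω hω
  have h2 := hsummAbs ω' hω'
  have hs1 : Summable (fun n : {n : Fin d → ℤ // n ≠ 0} =>
      f n.1 ω / (Complex.I * (dotR ω fun i => (n.1 i : ℝ))) *
        Complex.exp (Complex.I * ∑ i, (n.1 i : ℂ) * x i)) :=
    Summable.of_norm (by simpa using h1)
  have hs2 : Summable (fun n : {n : Fin d → ℤ // n ≠ 0} =>
      f n.1 ω' / (Complex.I * (dotR ω' fun i => (n.1 i : ℝ))) *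
        Complex.exp (Complex.I * ∑ i, (n.1 i : ℂ) * x i)) :=
    Summable.of_norm (by simpa using h2)
  rw [← hs1.tsum_sub hs2]
  have hnormsum : Summable (fun n : {n : Fin d → ℤ // n ≠ 0} =>
      ‖f n.1 ω / (Complex.I * (dotR ω fun i => (n.1 i : ℝ))) *
          Complex.exp (Complex.I * ∑ i, (n.1 i : ℂ) * x i) -
        f n.1 ω' / (Complex.I * (dotR ω' fun i => (n.1 i : ℝ))) *
          Complex.exp (Complex.I * ∑ i, (n.1 i : ℂ) * x i)‖) := by
    apply Summable.of_nonneg_of_le (fun n => norm_nonneg _)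
      (fun n => ?_) (hgsum.mul_left K)
    exact hdiff ω hω ω' hω' n
  calc ‖∑' n : {n : Fin d → ℤ // n ≠ 0},
        (f n.1 ω / (Complex.I * (dotR ω fun i => (n.1 i : ℝ))) *
          Complex.exp (Complex.I * ∑ i, (n.1 i : ℂ) * x i) -
        f n.1 ω' / (Complex.I * (dotR ω' fun i => (n.1 i : ℝ))) *
          Complex.exp (Complex.I * ∑ i, (n.1 i : ℂ) * x i))‖
      = ‖∑' n : {n : Fin d → ℤ // n ≠ 0},
        (f n.1 ω / (Complex.I * (dotR ω fun i => (n.1 i : ℝ))) *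
          Complex.exp (Complex.I * ∑ i, (n.1 i : ℂ) * x i) -
        f n.1 ω' / (Complex.I * (dotR ω' fun i => (n.1 i : ℝ))) *
          Complex.exp (Complex.I * ∑ i, (n.1 i : ℂ) * x i))‖ := rfl
    _ ≤ ∑' n : {n : Fin d → ℤ // n ≠ 0},
        ‖f n.1 ω / (Complex.I * (dotR ω fun i => (n.1 i : ℝ))) *
          Complex.exp (Complex.I * ∑ i, (n.1 i : ℂ) * x i) -
        f n.1 ω' / (Complex.I * (dotR ω' fun i => (n.1 i : ℝ))) *
          Complex.exp (Complex.I * ∑ i, (n.1 i : ℂ) * x i)‖ := norm_tsum_le_tsum_norm hnormsum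
    _ ≤ ∑' n : {n : Fin d → ℤ // n ≠ 0}, K * g n := by
        apply Summable.tsum_le_tsum _ hnormsum (hgsum.mul_left K)
        intro n
        exact hdiff ω hω ω' hω' n
    _ = K * ∑' n, g n := tsum_mul_left
    _ ≤ K * (12 / δ) ^ d := mul_le_mul_of_nonneg_left hgle hK0
    _ = P.factorial * 2 ^ P * 12 ^ d * δ ^ (-((P + d : ℕ) : ℝ)) * γ⁻¹ ^ 2 *
          (m + lam * γ) * eNorm (ω - ω') := by
        rw [hK, hC, Real.rpow_neg hδ.le, Real.rpow_natCast, pow_add]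
        field_simp
        have hX : δ ^ P * δ⁻¹ ^ P = 1 := by rw [← mul_pow, mul_inv_cancel₀ hδ.ne', one_pow]
        have hY : δ ^ d * δ⁻¹ ^ d = 1 := by rw [← mul_pow, mul_inv_cancel₀ hδ.ne', one_pow]
        linear_combination (m * eNorm (ω - ω') * 2 ^ P * 12 ^ d + lam * γ * eNorm (ω - ω') * 2 ^ P * 12 ^ d) *
          (δ ^ d * δ⁻¹ ^ d * hX + hY)
end

section
/- Let d ≥ 1, τ > d − 1, let B ⊆ ℝ^d be a closed ball, and let ω₀ : B → ℝ^d be injective with L-Lipschitz inverse on its image, i.e. ‖y − y'‖ ≤ L ‖ω₀(y) − ω₀(y')‖ for all y, y' ∈ B. For γ > 0 set B_γ = {y ∈ B : ω₀(y) is (γ,τ)-Diophantine}. Then there exists a constant c' > 0, depending only on d, τ, L and the diameter of ω₀(B), such that the Lebesgue outer measure of B \ B_γ satisfies volume(B \ B_γ) ≤ c' γ for every γ > 0. -/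
open MeasureTheory Set

/-- `ω` is `(γ,τ)`-Diophantine: `|⟨ω,n⟩| ≥ γ/‖n‖^τ` for every nonzero integer vector `n`. -/
def IsDiophantine {d : ℕ} (γ τ : ℝ) (ω : Fin d → ℝ) : Prop :=
  ∀ n : Fin d → ℤ, n ≠ 0 →
    γ / eNorm (fun i => (n i : ℝ)) ^ τ ≤ |dotR ω (fun i => (n i : ℝ))|

namespace DioAux

open ENNReal NNReal

variable {d : ℕ}

lemma eNorm_nonneg (v : Fin d → ℝ) : 0 ≤ eNorm v := Real.sqrt_nonneg _

lemma abs_le_eNorm (v : Fin d → ℝ) (i : Fin d) : |v i| ≤ eNorm v := by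
  rw [eNorm, ← Real.sqrt_sq_eq_abs]
  exact Real.sqrt_le_sqrt (Finset.single_le_sum (f := fun j => v j ^ 2)
    (fun j _ => sq_nonneg _) (Finset.mem_univ i))

lemma eNorm_le_sqrt_mul (v : Fin d → ℝ) {a : ℝ} (ha : ∀ i, |v i| ≤ a) (ha0 : 0 ≤ a) :
    eNorm v ≤ Real.sqrt d * a := by
  have h1 : eNorm v ≤ Real.sqrt (d * a ^ 2) := by
    apply Real.sqrt_le_sqrt
    calc ∑ i, v i ^ 2 ≤ ∑ _i : Fin d, a ^ 2 := by
          refine Finset.sum_le_sum fun i _ => ?_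
          rw [← sq_abs]
          exact pow_le_pow_left₀ (abs_nonneg _) (ha i) 2
      _ = d * a ^ 2 := by simp [Finset.sum_const, Finset.card_univ, mul_comm]
  calc eNorm v ≤ Real.sqrt (d * a ^ 2) := h1
    _ = Real.sqrt d * a := by
        rw [Real.sqrt_mul (by positivity), Real.sqrt_sq ha0]

lemma eq_of_eNorm_sub_nonpos {x y : Fin d → ℝ} (h : eNorm (x - y) ≤ 0) : x = y := by
  funext i
  have h1 := abs_le_eNorm (x - y) i
  have h2 : |x i - y i| ≤ 0 := by simpa using h1.trans h
  have h3 : x i - y i = 0 := abs_eq_zero.1 (le_antisymm h2 (abs_nonneg _))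
  linarith

lemma det_updateRow_one (i : Fin d) (c : Fin d → ℝ) :
    ((1 : Matrix (Fin d) (Fin d) ℝ).updateRow i c).det = c i := by
  have h : (∑ k, c k • (1 : Matrix (Fin d) (Fin d) ℝ) k) = c := by
    funext j
    simp [Matrix.one_apply, Finset.sum_ite_eq]
  calc ((1 : Matrix (Fin d) (Fin d) ℝ).updateRow i c).det
      = ((1 : Matrix (Fin d) (Fin d) ℝ).updateRow i
          (∑ k, c k • (1 : Matrix (Fin d) (Fin d) ℝ) k)).det := by rw [h]
    _ = c i := by rw [Matrix.det_updateRow_sum]; simp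

lemma slab_volume (v : Fin d → ℝ) (i : Fin d) (hvi : v i ≠ 0) (δ Rr : ℝ) :
    volume {x : Fin d → ℝ | |dotR x v| ≤ δ ∧ ∀ j, |x j| ≤ Rr}
      ≤ ENNReal.ofReal |(v i)⁻¹| *
          (ENNReal.ofReal (δ + δ) * ENNReal.ofReal (Rr + Rr) ^ (d - 1)) := by
  classical
  set M : Matrix (Fin d) (Fin d) ℝ := (1 : Matrix (Fin d) (Fin d) ℝ).updateRow i v with hM
  have hdet : LinearMap.det (Matrix.toLin' M) = v i := by
    rw [LinearMap.det_toLin']; exact det_updateRow_one i v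
  have hdet0 : LinearMap.det (Matrix.toLin' M) ≠ 0 := by rw [hdet]; exact hvi
  set S : Set (Fin d → ℝ) :=
    Set.pi Set.univ (Function.update (fun _ : Fin d => Icc (-Rr) Rr) i (Icc (-δ) δ)) with hS
  have hsub : {x : Fin d → ℝ | |dotR x v| ≤ δ ∧ ∀ j, |x j| ≤ Rr} ⊆ (Matrix.toLin' M) ⁻¹' S := by
    rintro x ⟨h1, h2⟩
    have hx : ∀ j, (Matrix.toLin' M) x j = if j = i then dotR x v else x j := by
      intro j
      rw [Matrix.toLin'_apply]
      by_cases hj : j = i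
      · subst hj
        simp [Matrix.mulVec, dotProduct, hM, dotR, mul_comm]
      · simp only [Matrix.mulVec, dotProduct, hM, Matrix.updateRow_ne hj,
          Matrix.one_apply, if_neg hj, ite_mul, one_mul, zero_mul, Finset.sum_ite_eq,
          Finset.mem_univ, if_pos]
    intro j _
    simp only [Function.update_apply]
    rcases eq_or_ne j i with hj | hj
    · rw [if_pos hj, hx j, if_pos hj]
      exact abs_le.1 h1
    · rw [if_neg hj, hx j, if_neg hj]
      exact abs_le.1 (h2 j)
  have hSvol : volume S = ENNReal.ofReal (δ + δ) * ENNReal.ofReal (Rr + Rr) ^ (d - 1) := by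
    rw [hS, volume_pi_pi]
    have hfun : ∀ j, volume (Function.update (fun _ : Fin d => Icc (-Rr) Rr) i (Icc (-δ) δ) j)
        = Function.update (fun _ : Fin d => volume (Icc (-Rr) Rr)) i (volume (Icc (-δ) δ)) j := by
      intro j
      simp [Function.update_apply, apply_ite volume]
    rw [Finset.prod_congr rfl (fun j _ => hfun j),
      Finset.prod_update_of_mem (Finset.mem_univ i)]
    have hcard : (Finset.univ \ {i}).card = d - 1 := by
      rw [Finset.sdiff_singleton_eq_erase, Finset.card_erase_of_mem (Finset.mem_univ i),
        Finset.card_univ, Fintype.card_fin]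
    simp [Real.volume_Icc, Finset.prod_const, sub_neg_eq_add, hcard]
  calc volume {x : Fin d → ℝ | |dotR x v| ≤ δ ∧ ∀ j, |x j| ≤ Rr}
      ≤ volume ((Matrix.toLin' M) ⁻¹' S) := measure_mono hsub
    _ = ENNReal.ofReal |(LinearMap.det (Matrix.toLin' M))⁻¹| * volume S :=
        Measure.addHaar_preimage_linearMap volume hdet0 S
    _ = ENNReal.ofReal |(v i)⁻¹| *
          (ENNReal.ofReal (δ + δ) * ENNReal.ofReal (Rr + Rr) ^ (d - 1)) := by
        rw [hdet, hSvol]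

lemma vol_le_of_lipschitz_image {K : ℝ≥0} {g : (Fin d → ℝ) → (Fin d → ℝ)} {s t : Set (Fin d → ℝ)}
    (hg : LipschitzOnWith K g s) (hts : t ⊆ s) (A : Set (Fin d → ℝ)) (hA : A ⊆ g '' t) :
    volume A ≤ (K : ℝ≥0∞) ^ d * volume t := by
  have h1 : (μH[(d : ℝ)] : Measure (Fin d → ℝ)) = volume := by
    simpa using hausdorffMeasure_pi_real (ι := Fin d)
  calc volume A ≤ volume (g '' t) := measure_mono hA
    _ = μH[(d : ℝ)] (g '' t) := by rw [h1]
    _ ≤ (K : ℝ≥0∞) ^ (d : ℝ) * μH[(d : ℝ)] t :=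
        (hg.mono hts).hausdorffMeasure_image_le (by positivity)
    _ = (K : ℝ≥0∞) ^ d * volume t := by rw [h1, ENNReal.rpow_natCast]

lemma tsum_pi_prod (w : ℤ → ℝ≥0∞) : ∀ m : ℕ,
    ∑' n : Fin m → ℤ, ∏ i, w (n i) = (∑' k : ℤ, w k) ^ m
  | 0 => by
      rw [tsum_eq_single (fun _ => (0 : ℤ)) (fun b hb => absurd (Subsingleton.elim b _) hb)]
      simp
  | (m + 1) => by
      rw [← (Fin.consEquiv (fun _ : Fin (m + 1) => ℤ)).tsum_eq]
      have h : ∀ p : ℤ × (Fin m → ℤ),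
          (∏ i, w ((Fin.consEquiv (fun _ : Fin (m + 1) => ℤ)) p i))
            = w p.1 * ∏ i : Fin m, w (p.2 i) := by
        rintro ⟨k, nn⟩
        rw [Fin.prod_univ_succ]
        simp [Fin.consEquiv]
      rw [tsum_congr h, ENNReal.tsum_prod']
      simp only [ENNReal.tsum_mul_left]
      rw [ENNReal.tsum_mul_right, tsum_pi_prod w m, pow_succ]
      ring

lemma summable_w {q : ℝ} (hq : 1 < q) :
    Summable (fun k : ℤ => (max |(k : ℝ)| 1) ^ (-q)) := by
  have h1 : Summable (fun n : ℕ => (n : ℝ) ^ (-q)) :=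
    Real.summable_nat_rpow.2 (by linarith)
  have hnat : Summable (fun n : ℕ => (max |(n : ℝ)| 1) ^ (-q)) := by
    refine (_root_.summable_nat_add_iff (f := fun n : ℕ => (max |(n : ℝ)| 1) ^ (-q)) 1).1 ?_
    refine ((_root_.summable_nat_add_iff 1).2 h1).congr fun n => ?_
    have h2 : (1 : ℝ) ≤ (n : ℝ) + 1 := by linarith [Nat.cast_nonneg (α := ℝ) n]
    have h3 : |((n : ℝ) + 1)| = (n : ℝ) + 1 := abs_of_nonneg (by positivity)
    push_cast
    rw [h3, max_eq_left h2]
  apply Summable.of_nat_of_neg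
  · exact hnat.congr fun n => by push_cast; ring_nf
  · exact hnat.congr fun n => by push_cast [abs_neg]; ring_nf

lemma tsum_w_ne_top {q : ℝ} (hq : 1 < q) :
    (∑' k : ℤ, ENNReal.ofReal ((max |(k : ℝ)| 1) ^ (-q))) ≠ ⊤ := by
  rw [← ENNReal.ofReal_tsum_of_nonneg (fun k => Real.rpow_nonneg (by positivity) _)
    (summable_w hq)]
  exact ENNReal.ofReal_ne_top

end DioAux

set_option maxHeartbeats 1000000 in
open ENNReal NNReal in

/-- Pull-back of the Diophantine measure estimate by a frequency map with Lipschitz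
inverse: if `ω₀ : B → ℝ^d` is injective on the closed ball `B` with `L`-Lipschitz
inverse and bounded image, then `volume (B \ B_γ) ≤ c'·γ` for all `γ > 0`, where
`B_γ = {y ∈ B : ω₀(y) is (γ,τ)-Diophantine}`. -/
theorem measure_nonresonant_actions (d : ℕ) (hd : 1 ≤ d) (τ : ℝ) (hτ : (d : ℝ) - 1 < τ)
    (y₀ : Fin d → ℝ) (r : ℝ) (hr : 0 ≤ r) (L : ℝ) (hL : 0 ≤ L)
    (ω₀ : (Fin d → ℝ) → (Fin d → ℝ))
    (B : Set (Fin d → ℝ)) (hB : B = {y | eNorm (y - y₀) ≤ r})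
    (hbdd : Bornology.IsBounded (ω₀ '' B))
    (hLipInv : ∀ y ∈ B, ∀ y' ∈ B, eNorm (y - y') ≤ L * eNorm (ω₀ y - ω₀ y')) :
    ∃ c' : ℝ, 0 < c' ∧ ∀ γ : ℝ, 0 < γ →
      volume (B \ {y ∈ B | IsDiophantine γ τ (ω₀ y)}) ≤ ENNReal.ofReal (c' * γ) := by
  classical
  have hd0 : (0 : ℝ) < d := by exact_mod_cast hd
  have hne : Nonempty (Fin d) := ⟨⟨0, hd⟩⟩
  -- bounding box for the image
  obtain ⟨R₀, hR₀⟩ := hbdd.subset_closedBall 0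
  set Rr : ℝ := max R₀ 1 with hRrdef
  have hRr1 : (1 : ℝ) ≤ Rr := le_max_right _ _
  have hRr0 : (0 : ℝ) ≤ Rr := by linarith
  have hcoord : ∀ x ∈ ω₀ '' B, ∀ j, |x j| ≤ Rr := by
    intro x hx j
    have h1 : dist x 0 ≤ R₀ := Metric.mem_closedBall.1 (hR₀ hx)
    have h2 : dist (x j) ((0 : Fin d → ℝ) j) ≤ dist x 0 := dist_le_pi_dist x 0 j
    have h3 : |x j| ≤ R₀ := by
      simpa [Real.dist_eq] using h2.trans h1
    exact h3.trans (le_max_left _ _)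
  -- the inverse map and its Lipschitz property
  set KK : ℝ := L * Real.sqrt d with hKKdef
  have hKK0 : 0 ≤ KK := mul_nonneg hL (Real.sqrt_nonneg _)
  set g := Function.invFunOn ω₀ B with hgdef
  have hgB : ∀ x ∈ ω₀ '' B, g x ∈ B ∧ ω₀ (g x) = x := by
    intro x hx
    obtain ⟨y, hy, rfl⟩ := hx
    exact ⟨Function.invFunOn_mem ⟨y, hy, rfl⟩, Function.invFunOn_eq ⟨y, hy, rfl⟩⟩
  have hgLip : LipschitzOnWith KK.toNNReal g (ω₀ '' B) := by
    apply LipschitzOnWith.of_dist_le_mul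
    intro x hx x' hx'
    obtain ⟨hgx, hωx⟩ := hgB x hx
    obtain ⟨hgx', hωx'⟩ := hgB x' hx'
    have h1 : dist (g x) (g x') ≤ eNorm (g x - g x') := by
      rw [dist_eq_norm]
      refine (pi_norm_le_iff_of_nonneg (DioAux.eNorm_nonneg _)).2 fun i => ?_
      simpa [Real.norm_eq_abs] using DioAux.abs_le_eNorm (g x - g x') i
    have h2 : eNorm (g x - g x') ≤ L * eNorm (x - x') := by
      have h := hLipInv (g x) hgx (g x') hgx'
      rwa [hωx, hωx'] at h
    have h3 : eNorm (x - x') ≤ Real.sqrt d * dist x x' := by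
      rw [dist_eq_norm]
      refine DioAux.eNorm_le_sqrt_mul _ (fun i => ?_) (norm_nonneg _)
      simpa [Real.norm_eq_abs] using norm_le_pi_norm (x - x') i
    have h4 : L * eNorm (x - x') ≤ L * (Real.sqrt d * dist x x') :=
      mul_le_mul_of_nonneg_left h3 hL
    have h5 : (KK.toNNReal : ℝ) = KK := Real.coe_toNNReal _ hKK0
    calc dist (g x) (g x') ≤ eNorm (g x - g x') := h1
      _ ≤ L * eNorm (x - x') := h2
      _ ≤ L * (Real.sqrt d * dist x x') := h4
      _ = (KK.toNNReal : ℝ) * dist x x' := by rw [h5, hKKdef]; ring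
  -- summability constants
  set q : ℝ := (τ + 1) / d with hqdef
  have hq1 : 1 < q := (one_lt_div hd0).2 (by linarith)
  set w : ℤ → ℝ≥0∞ := fun k => ENNReal.ofReal ((max |(k : ℝ)| 1) ^ (-q)) with hwdef
  set T : ℝ≥0∞ := (∑' k : ℤ, w k) ^ d with hTdef
  have hTtop : T ≠ ⊤ := ENNReal.pow_ne_top (DioAux.tsum_w_ne_top hq1)
  set Creal : ℝ := KK ^ d * (Real.sqrt d * (2 * (2 * Rr) ^ (d - 1))) with hCrealdef
  have hCreal0 : 0 ≤ Creal := by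
    apply mul_nonneg (pow_nonneg hKK0 d)
    positivity
  have hc'pos : 0 < Creal * T.toReal + 1 := by
    have := mul_nonneg hCreal0 (ENNReal.toReal_nonneg (a := T))
    linarith
  refine ⟨Creal * T.toReal + 1, hc'pos, fun γ hγ => ?_⟩
  -- the resonant zones
  set A : {n : Fin d → ℤ // n ≠ 0} → Set (Fin d → ℝ) := fun n =>
    {y | y ∈ B ∧ |dotR (ω₀ y) (fun i => ((n.1 i : ℤ) : ℝ))| <
      γ / eNorm (fun i => ((n.1 i : ℤ) : ℝ)) ^ τ} with hAdef
  have hcover : B \ {y ∈ B | IsDiophantine γ τ (ω₀ y)} ⊆ ⋃ n, A n := by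
    rintro y ⟨hyB, hy⟩
    have hnd : ¬ IsDiophantine γ τ (ω₀ y) := fun h => hy ⟨hyB, h⟩
    rw [IsDiophantine] at hnd
    push_neg at hnd
    obtain ⟨n, hn0, hlt⟩ := hnd
    exact mem_iUnion.2 ⟨⟨n, hn0⟩, hyB, hlt⟩
  -- pointwise estimate for each resonant zone
  have hvol : ∀ n : {n : Fin d → ℤ // n ≠ 0},
      volume (A n) ≤ ENNReal.ofReal (Creal * γ) * ∏ i, w (n.1 i) := by
    rintro ⟨n, hn0⟩
    set v : Fin d → ℝ := fun i => ((n i : ℤ) : ℝ) with hvdef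
    have hvne : ∃ i, v i ≠ 0 := by
      obtain ⟨i, hi⟩ := Function.ne_iff.1 hn0
      refine ⟨i, ?_⟩
      simp only [hvdef]
      exact_mod_cast fun h => hi (by exact_mod_cast h)
    set N : ℝ := eNorm v with hNdef
    have hN1 : 1 ≤ N := by
      obtain ⟨i, hi⟩ := hvne
      have h1 : (1 : ℝ) ≤ |v i| := by
        have hni : n i ≠ 0 := by
          intro h
          exact hi (by simp [hvdef, h])
        have := Int.one_le_abs hni
        calc (1 : ℝ) ≤ |(n i : ℤ)| := by exact_mod_cast this
          _ = |v i| := by simp [hvdef]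
      exact h1.trans (DioAux.abs_le_eNorm v i)
    have hN0 : (0 : ℝ) < N := lt_of_lt_of_le one_pos hN1
    have hNτ : (0 : ℝ) < N ^ τ := Real.rpow_pos_of_pos hN0 τ
    set δ : ℝ := γ / N ^ τ with hδdef
    have hδ0 : 0 < δ := div_pos hγ hNτ
    have hAB : A ⟨n, hn0⟩ ⊆ B := fun y hy => hy.1
    -- A is contained in the image of its ω₀-image under g
    have hsub1 : A ⟨n, hn0⟩ ⊆ g '' (ω₀ '' A ⟨n, hn0⟩) := by
      intro y hy
      have hyB : y ∈ B := hy.1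
      have hx : ω₀ y ∈ ω₀ '' B := mem_image_of_mem _ hyB
      obtain ⟨hg1, hg2⟩ := hgB _ hx
      have heq : g (ω₀ y) = y := by
        have h := hLipInv (g (ω₀ y)) hg1 y hyB
        rw [hg2] at h
        have h0 : eNorm (ω₀ y - ω₀ y) = 0 := by simp [eNorm]
        rw [h0, mul_zero] at h
        exact DioAux.eq_of_eNorm_sub_nonpos h
      exact ⟨ω₀ y, mem_image_of_mem _ hy, heq⟩
    have hstep2 : volume (A ⟨n, hn0⟩)
        ≤ ((KK.toNNReal : ℝ≥0∞)) ^ d * volume (ω₀ '' A ⟨n, hn0⟩) :=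
      DioAux.vol_le_of_lipschitz_image hgLip (image_mono hAB) _ hsub1
    -- the maximal coordinate
    obtain ⟨i, -, hi⟩ := Finset.exists_max_image Finset.univ (fun j => |v j|)
      Finset.univ_nonempty
    have hvi0 : v i ≠ 0 := by
      obtain ⟨j, hj⟩ := hvne
      intro h0
      have := hi j (Finset.mem_univ j)
      rw [h0] at this
      simp only [abs_zero] at this
      exact hj (abs_eq_zero.1 (le_antisymm this (abs_nonneg _)))
    have hNle : N ≤ Real.sqrt d * |v i| :=
      DioAux.eNorm_le_sqrt_mul v (fun j => hi j (Finset.mem_univ j)) (abs_nonneg _)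
    -- image is inside a slab
    have hslab : ω₀ '' A ⟨n, hn0⟩ ⊆ {x : Fin d → ℝ | |dotR x v| ≤ δ ∧ ∀ j, |x j| ≤ Rr} := by
      rintro x ⟨y, hy, rfl⟩
      exact ⟨le_of_lt hy.2, fun j => hcoord _ (mem_image_of_mem _ hy.1) j⟩
    have hstep3 : volume (ω₀ '' A ⟨n, hn0⟩)
        ≤ ENNReal.ofReal |(v i)⁻¹| *
          (ENNReal.ofReal (δ + δ) * ENNReal.ofReal (Rr + Rr) ^ (d - 1)) :=
      (measure_mono hslab).trans (DioAux.slab_volume v i hvi0 δ Rr)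
    -- collect everything into one real number
    have hKpow : ((KK.toNNReal : ℝ≥0∞)) ^ d = ENNReal.ofReal (KK ^ d) := by
      rw [ENNReal.ofReal_pow hKK0]
      rfl
    have hbig : volume (A ⟨n, hn0⟩)
        ≤ ENNReal.ofReal (KK ^ d * (|(v i)⁻¹| * ((δ + δ) * (Rr + Rr) ^ (d - 1)))) := by
      calc volume (A ⟨n, hn0⟩)
          ≤ ((KK.toNNReal : ℝ≥0∞)) ^ d * volume (ω₀ '' A ⟨n, hn0⟩) := hstep2
        _ ≤ ((KK.toNNReal : ℝ≥0∞)) ^ d *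
              (ENNReal.ofReal |(v i)⁻¹| *
                (ENNReal.ofReal (δ + δ) * ENNReal.ofReal (Rr + Rr) ^ (d - 1))) := by
            exact mul_le_mul_right hstep3 _
        _ = ENNReal.ofReal (KK ^ d * (|(v i)⁻¹| * ((δ + δ) * (Rr + Rr) ^ (d - 1)))) := by
            rw [hKpow, ← ENNReal.ofReal_pow (by linarith : (0:ℝ) ≤ Rr + Rr),
              ← ENNReal.ofReal_mul (by linarith : (0:ℝ) ≤ δ + δ),
              ← ENNReal.ofReal_mul (abs_nonneg _),
              ← ENNReal.ofReal_mul (pow_nonneg hKK0 d)]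
    -- the real-number inequality
    have hinv : |(v i)⁻¹| ≤ Real.sqrt d / N := by
      rw [abs_inv, inv_eq_one_div, div_le_div_iff₀ (abs_pos.2 hvi0) hN0]
      linarith
    have hreal : KK ^ d * (|(v i)⁻¹| * ((δ + δ) * (Rr + Rr) ^ (d - 1)))
        ≤ Creal * γ * N ^ (-(τ + 1)) := by
      have hNpow : N ^ (-(τ + 1)) = (N ^ τ * N)⁻¹ := by
        rw [Real.rpow_neg hN0.le]
        congr 1
        rw [show τ + 1 = τ + (1:ℝ) from rfl, Real.rpow_add hN0, Real.rpow_one]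
      have hfac0 : (0:ℝ) ≤ (δ + δ) * (Rr + Rr) ^ (d - 1) := by positivity
      have h6 : KK ^ d * (|(v i)⁻¹| * ((δ + δ) * (Rr + Rr) ^ (d - 1)))
          ≤ KK ^ d * ((Real.sqrt d / N) * ((δ + δ) * (Rr + Rr) ^ (d - 1))) := by
        apply mul_le_mul_of_nonneg_left _ (pow_nonneg hKK0 d)
        exact mul_le_mul_of_nonneg_right hinv hfac0
      have h7 : KK ^ d * ((Real.sqrt d / N) * ((δ + δ) * (Rr + Rr) ^ (d - 1)))
          = Creal * γ * N ^ (-(τ + 1)) := by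
        rw [hNpow, hCrealdef, hδdef]
        have hNτ' : N ^ τ ≠ 0 := ne_of_gt hNτ
        have hN' : N ≠ 0 := ne_of_gt hN0
        field_simp
        ring
      linarith
    have hterm : volume (A ⟨n, hn0⟩) ≤ ENNReal.ofReal (Creal * γ * N ^ (-(τ + 1))) :=
      hbig.trans (ENNReal.ofReal_le_ofReal hreal)
    -- compare with the product weight
    have hNw : ENNReal.ofReal (N ^ (-(τ + 1))) ≤ ∏ j, w (n j) := by
      have hsplit : N ^ (-(τ + 1)) = (N ^ (-q)) ^ (d : ℕ) := by
        rw [← Real.rpow_natCast (N ^ (-q)) d, ← Real.rpow_mul hN0.le]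
        congr 1
        rw [hqdef]
        field_simp
      rw [hsplit, ENNReal.ofReal_pow (Real.rpow_nonneg hN0.le _)]
      have hprodconst : ENNReal.ofReal (N ^ (-q)) ^ (d : ℕ)
          = ∏ _j : Fin d, ENNReal.ofReal (N ^ (-q)) := by
        simp [Finset.prod_const, Finset.card_univ]
      rw [hprodconst]
      refine Finset.prod_le_prod' fun j _ => ?_
      apply ENNReal.ofReal_le_ofReal
      apply Real.rpow_le_rpow_of_nonpos
      · have : (0:ℝ) < 1 := one_pos
        positivity
      · exact max_le ((DioAux.abs_le_eNorm v j)) hN1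
      · linarith
    calc volume (A ⟨n, hn0⟩) ≤ ENNReal.ofReal (Creal * γ * N ^ (-(τ + 1))) := hterm
      _ = ENNReal.ofReal (Creal * γ) * ENNReal.ofReal (N ^ (-(τ + 1))) := by
          rw [← ENNReal.ofReal_mul (mul_nonneg hCreal0 hγ.le)]
      _ ≤ ENNReal.ofReal (Creal * γ) * ∏ j, w (n j) := mul_le_mul_right hNw _
  -- sum everything up
  have hsubsum : (∑' nn : {n : Fin d → ℤ // n ≠ 0}, ∏ i, w (nn.1 i)) ≤ T := by
    calc (∑' nn : {n : Fin d → ℤ // n ≠ 0}, ∏ i, w (nn.1 i))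
        ≤ ∑' m : Fin d → ℤ, ∏ i, w (m i) :=
          ENNReal.tsum_comp_le_tsum_of_injective
            (Subtype.val_injective :
              Function.Injective ((↑) : {n : Fin d → ℤ // n ≠ 0} → (Fin d → ℤ)))
            (fun m : Fin d → ℤ => ∏ i, w (m i))
      _ = T := by rw [hTdef, DioAux.tsum_pi_prod w d]
  calc volume (B \ {y ∈ B | IsDiophantine γ τ (ω₀ y)})
      ≤ volume (⋃ nn, A nn) := measure_mono hcover
    _ ≤ ∑' nn, volume (A nn) := measure_iUnion_le _
    _ ≤ ∑' nn : {n : Fin d → ℤ // n ≠ 0}, ENNReal.ofReal (Creal * γ) * ∏ i, w (nn.1 i) :=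
        ENNReal.tsum_le_tsum hvol
    _ = ENNReal.ofReal (Creal * γ) * ∑' nn : {n : Fin d → ℤ // n ≠ 0}, ∏ i, w (nn.1 i) :=
        ENNReal.tsum_mul_left
    _ ≤ ENNReal.ofReal (Creal * γ) * T := mul_le_mul_right hsubsum _
    _ ≤ ENNReal.ofReal ((Creal * T.toReal + 1) * γ) := by
        rw [← ENNReal.ofReal_toReal hTtop,
          ← ENNReal.ofReal_mul (mul_nonneg hCreal0 hγ.le)]
        apply ENNReal.ofReal_le_ofReal
        rw [ENNReal.toReal_ofReal ENNReal.toReal_nonneg]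
        have hident : (Creal * T.toReal + 1) * γ = Creal * γ * T.toReal + γ := by ring
        linarith
end
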